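/- Assume q₂ + q₃ > 0 and c₃ + q₃ > 0. Then there exists a point x ∈ B at which the three vectors g(x,0), g(x,1), and [g(·,0), g(·,1)](x) form a basis of ℝ³ (i.e. they are linearly independent), where [V,W](x) = DW(x)·V(x) − DV(x)·W(x) denotes the Lie bracket. -/

import Mathlib

open Set Real

private lemma fderiv_g_aux (a q₁ c₁ d c₁M dM q₂ q₃ c₂ c₃ c₂M c₃M i : ℝ)
    (x : ℝ×ℝ×ℝ) (hE : 1 + c₂ * x.2.1 + c₃ * x.2.2 ≠ 0)
    (hEM : 1 + c₂M * x.2.1 + c₃M * x.2.2 ≠ 0) (v : ℝ×ℝ×ℝ) :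
    fderiv ℝ (fun y : ℝ×ℝ×ℝ => (a * (1 - y.1) - (q₁ + q₂ * y.2.1 + q₃ * y.2.2) * y.1,
       c₁ / (1 + c₂ * y.2.1 + c₃ * y.2.2) * y.1 - d * y.2.1,
       c₁M / (1 + c₂M * y.2.1 + c₃M * y.2.2) * i - dM * y.2.2)) x v =
    (a * (-v.1) - ((q₂ * v.2.1 + q₃ * v.2.2) * x.1 + (q₁ + q₂*x.2.1 + q₃*x.2.2) * v.1),
     (-(c₁ * (c₂*v.2.1 + c₃*v.2.2)) / (1 + c₂*x.2.1 + c₃*x.2.2)^2) * x.1 + c₁/(1+c₂*x.2.1+c₃*x.2.2) * v.1 - d * v.2.1,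
     (-(c₁M * (c₂M*v.2.1 + c₃M*v.2.2)) / (1 + c₂M*x.2.1 + c₃M*x.2.2)^2) * i - dM * v.2.2) := by
  have hx1 : HasFDerivAt (fun y : ℝ×ℝ×ℝ => y.1) (ContinuousLinearMap.fst ℝ ℝ (ℝ×ℝ)) x := hasFDerivAt_fst
  have hx2 : HasFDerivAt (fun y : ℝ×ℝ×ℝ => y.2.1)
      ((ContinuousLinearMap.fst ℝ ℝ ℝ).comp (ContinuousLinearMap.snd ℝ ℝ (ℝ×ℝ))) x :=
    hasFDerivAt_fst.comp x hasFDerivAt_snd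
  have hx3 : HasFDerivAt (fun y : ℝ×ℝ×ℝ => y.2.2)
      ((ContinuousLinearMap.snd ℝ ℝ ℝ).comp (ContinuousLinearMap.snd ℝ ℝ (ℝ×ℝ))) x :=
    hasFDerivAt_snd.comp x hasFDerivAt_snd
  have h1 := (((hasFDerivAt_const (1:ℝ) x).sub hx1).const_mul a).sub
      ((((hasFDerivAt_const q₁ x).add (hx2.const_mul q₂)).add (hx3.const_mul q₃)).mul hx1)
  have hEd := ((hasFDerivAt_const (1:ℝ) x).add (hx2.const_mul c₂)).add (hx3.const_mul c₃)
  have hinv := (hasFDerivAt_inv hE).comp x hEd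
  have h2 := ((hinv.const_mul c₁).mul hx1).sub (hx2.const_mul d)
  have hEMd := ((hasFDerivAt_const (1:ℝ) x).add (hx2.const_mul c₂M)).add (hx3.const_mul c₃M)
  have hinvM := (hasFDerivAt_inv hEM).comp x hEMd
  have h3 := ((hinvM.const_mul c₁M).mul_const i).sub (hx3.const_mul dM)
  have hF := (h1.prodMk (h2.prodMk h3))
  simp only [Function.comp_def] at hF
  simp only [div_eq_mul_inv]
  rw [HasFDerivAt.fderiv (f := fun y : ℝ×ℝ×ℝ => (a * (1 - y.1) - (q₁ + q₂ * y.2.1 + q₃ * y.2.2) * y.1,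
    c₁ * (1 + c₂ * y.2.1 + c₃ * y.2.2)⁻¹ * y.1 - d * y.2.1,
    c₁M * (1 + c₂M * y.2.1 + c₃M * y.2.2)⁻¹ * i - dM * y.2.2)) hF]
  simp only [ContinuousLinearMap.prod_apply, ContinuousLinearMap.sub_apply,
    ContinuousLinearMap.add_apply, ContinuousLinearMap.smul_apply,
    ContinuousLinearMap.comp_apply, ContinuousLinearMap.smulRight_apply,
    ContinuousLinearMap.coe_fst', ContinuousLinearMap.coe_snd',
    ContinuousLinearMap.zero_apply, ContinuousLinearMap.one_apply, smul_eq_mul, Prod.mk.injEq,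
    ContinuousLinearMap.toSpanSingleton_apply, Pi.add_apply, Pi.sub_apply, Pi.mul_apply]
  refine ⟨by ring, ?_, ?_⟩ <;> field_simp <;> ring

private lemma aux_li (u₁ u₂ m w₁ w₂ w₃ : ℝ) (hm : m ≠ 0) (hdet : u₁*w₂ - u₂*w₁ ≠ 0) :
    LinearIndependent ℝ ![((u₁,u₂,(0:ℝ)) : ℝ×ℝ×ℝ), (u₁,u₂,m), (w₁,w₂,w₃)] := by
  rw [Fintype.linearIndependent_iff]
  intro c hc
  have h := hc
  simp [Fin.sum_univ_three, Prod.ext_iff, Prod.smul_mk, smul_eq_mul] at h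
  obtain ⟨h1, h2, h3⟩ := h
  have hc01 : c 0 + c 1 = 0 := by
    have h4 : (c 0 + c 1) * (u₁*w₂ - u₂*w₁) = 0 := by linear_combination w₂ * h1 - w₁ * h2
    rcases mul_eq_zero.1 h4 with h | h
    · exact h
    · exact absurd h hdet
  have hc2 : c 2 = 0 := by
    by_contra h
    have hw1 : w₁ = 0 := by
      have : c 2 * w₁ = 0 := by linear_combination h1 - u₁ * hc01
      exact (mul_eq_zero.1 this).resolve_left h
    have hw2 : w₂ = 0 := by
      have : c 2 * w₂ = 0 := by linear_combination h2 - u₂ * hc01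
      exact (mul_eq_zero.1 this).resolve_left h
    apply hdet; rw [hw1, hw2]; ring
  have hc1 : c 1 = 0 := by
    have : c 1 * m = 0 := by linear_combination h3 - w₃ * hc2
    exact (mul_eq_zero.1 this).resolve_right hm
  have hc0 : c 0 = 0 := by linarith
  intro i; fin_cases i <;> assumption

set_option maxHeartbeats 2000000 in
theorem stmt_16
    (a q₁ c₁ d c₁M dM q₂ q₃ c₂ c₃ c₂M c₃M : ℝ)
    (ha : 0 < a) (hq₁ : 0 < q₁) (hc₁ : 0 < c₁) (hd : 0 < d)
    (hc₁M : 0 < c₁M) (hdM : 0 < dM)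
    (hq₂ : 0 ≤ q₂) (hq₃ : 0 ≤ q₃) (hc₂ : 0 ≤ c₂) (hc₃ : 0 ≤ c₃)
    (hc₂M : 0 ≤ c₂M) (hc₃M : 0 ≤ c₃M)
    (g : ℝ × ℝ × ℝ → ℝ → ℝ × ℝ × ℝ)
    (hg : ∀ (x : ℝ × ℝ × ℝ) (i : ℝ), g x i =
      (a * (1 - x.1) - (q₁ + q₂ * x.2.1 + q₃ * x.2.2) * x.1,
       c₁ / (1 + c₂ * x.2.1 + c₃ * x.2.2) * x.1 - d * x.2.1,
       c₁M / (1 + c₂M * x.2.1 + c₃M * x.2.2) * i - dM * x.2.2))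
    (b₁ B₁ b₂ : ℝ)
    (hb₁ : b₁ = a / (a + q₁ + q₂ * (c₁ / d) + q₃ * (c₁M / dM)))
    (hB₁ : B₁ = a / (a + q₁))
    (hb₂ : b₂ = c₁ * b₁ / (d * (1 + c₂ * (c₁ / d) + c₃ * (c₁M / dM))))
    (hqq : 0 < q₂ + q₃) (hcq : 0 < c₃ + q₃) :
    ∃ x ∈ Icc b₁ B₁ ×ˢ Icc b₂ (c₁ / d) ×ˢ Icc 0 (c₁M / dM),
      LinearIndependent ℝ
        ![g x 0, g x 1,
          fderiv ℝ (fun y => g y 1) x (g x 0)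
            - fderiv ℝ (fun y => g y 0) x (g x 1)] := by
  have hcd : 0 < c₁ / d := div_pos hc₁ hd
  have hcdM : 0 < c₁M / dM := div_pos hc₁M hdM
  have hS : 0 < a + q₁ + q₂ * (c₁ / d) + q₃ * (c₁M / dM) := by positivity
  have hb₁S : b₁ * (a + q₁ + q₂ * (c₁ / d) + q₃ * (c₁M / dM)) = a := by
    rw [hb₁]; exact div_mul_cancel₀ a hS.ne'
  have hB₁S : B₁ * (a + q₁) = a := by
    rw [hB₁]; exact div_mul_cancel₀ a (by linarith)
  have hb₁pos : 0 < b₁ := by rw [hb₁]; positivity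
  have hb₁lt1 : b₁ < 1 := by
    rw [hb₁, div_lt_one hS]; nlinarith [mul_nonneg hq₂ hcd.le, mul_nonneg hq₃ hcdM.le]
  have hB₁pos : 0 < B₁ := by rw [hB₁]; positivity
  have hb₁B₁ : b₁ ≤ B₁ := by
    rw [hb₁, hB₁]
    apply div_le_div_of_nonneg_left ha.le (by linarith)
    nlinarith [mul_nonneg hq₂ hcd.le, mul_nonneg hq₃ hcdM.le]
  have hb₂le : b₂ ≤ c₁ / d := by
    rw [hb₂]
    have hD : (1:ℝ) ≤ 1 + c₂ * (c₁ / d) + c₃ * (c₁M / dM) := by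
      nlinarith [mul_nonneg hc₂ hcd.le, mul_nonneg hc₃ hcdM.le]
    apply div_le_div₀ hc₁.le (by nlinarith) hd (by nlinarith)
  have hEpos : 0 < 1 + c₂ * (c₁ / d) := by positivity
  have hEMpos : 0 < 1 + c₂M * (c₁ / d) := by positivity
  have hE0 : (1 + c₂ * (c₁ / d)) ≠ 0 := ne_of_gt hEpos
  have hEM0 : (1 + c₂M * (c₁ / d)) ≠ 0 := ne_of_gt hEMpos
  have hm : 0 < c₁M / (1 + c₂M * (c₁ / d)) := div_pos hc₁M hEMpos
  -- choose the first coordinate p of the point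
  obtain ⟨p, hp1, hp2, hkey⟩ : ∃ p, b₁ ≤ p ∧ p ≤ B₁ ∧
      (a * (1 - p) - (q₁ + q₂ * (c₁ / d)) * p) * (c₁ * c₃) / (1 + c₂ * (c₁ / d))^2
        - (c₁ / (1 + c₂ * (c₁ / d)) * p - c₁) * q₃ ≠ 0 := by
    rcases eq_or_lt_of_le hq₃ with h3 | h3
    · -- q₃ = 0, hence c₃ > 0 and q₂ > 0
      have hc₃pos : 0 < c₃ := by linarith
      have hq₂pos : 0 < q₂ := by linarith
      refine ⟨B₁, hb₁B₁, le_rfl, ?_⟩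
      have hu₁ : a * (1 - B₁) - (q₁ + q₂ * (c₁ / d)) * B₁ = -(q₂ * (c₁ / d) * B₁) := by
        linear_combination -hB₁S
      rw [← h3, hu₁, mul_zero, sub_zero]
      have hpos : 0 < (q₂ * (c₁ / d) * B₁) * (c₁ * c₃) := by positivity
      have hnum : -(q₂ * (c₁ / d) * B₁) * (c₁ * c₃) < 0 := by nlinarith
      exact ne_of_lt (div_neg_of_neg_of_pos hnum (by positivity))
    · -- q₃ > 0
      refine ⟨b₁, le_rfl, hb₁B₁, ?_⟩
      have hu₁ : a * (1 - b₁) - (q₁ + q₂ * (c₁ / d)) * b₁ = q₃ * (c₁M / dM) * b₁ := by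
        linear_combination -hb₁S
      have hu₂ : c₁ / (1 + c₂ * (c₁ / d)) * b₁ - c₁ < 0 := by
        have h1 : c₁ / (1 + c₂ * (c₁ / d)) ≤ c₁ := by
          apply div_le_self hc₁.le; nlinarith [mul_nonneg hc₂ hcd.le]
        nlinarith [div_pos hc₁ hEpos]
      have ht1 : 0 ≤ (q₃ * (c₁M / dM) * b₁) * (c₁ * c₃) / (1 + c₂ * (c₁ / d))^2 := by positivity
      have ht2 : 0 < -((c₁ / (1 + c₂ * (c₁ / d)) * b₁ - c₁) * q₃) := by nlinarith
      rw [hu₁]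
      nlinarith
  have hppos : 0 < p := lt_of_lt_of_le hb₁pos hp1
  refine ⟨(p, c₁ / d, 0), ?_, ?_⟩
  · simp only [Set.mem_prod, Set.mem_Icc]
    exact ⟨⟨hp1, hp2⟩, ⟨hb₂le, le_rfl⟩, le_rfl, hcdM.le⟩
  · -- linear independence at x = (p, c₁/d, 0)
    have hEne : 1 + c₂ * ((p, c₁ / d, (0:ℝ)) : ℝ×ℝ×ℝ).2.1
        + c₃ * ((p, c₁ / d, (0:ℝ)) : ℝ×ℝ×ℝ).2.2 ≠ 0 := by
      show 1 + c₂ * (c₁ / d) + c₃ * 0 ≠ 0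
      rw [mul_zero, add_zero]; exact hE0
    have hEMne : 1 + c₂M * ((p, c₁ / d, (0:ℝ)) : ℝ×ℝ×ℝ).2.1
        + c₃M * ((p, c₁ / d, (0:ℝ)) : ℝ×ℝ×ℝ).2.2 ≠ 0 := by
      show 1 + c₂M * (c₁ / d) + c₃M * 0 ≠ 0
      rw [mul_zero, add_zero]; exact hEM0
    have hg0 : g (p, c₁ / d, 0) 0 =
        (a * (1 - p) - (q₁ + q₂ * (c₁ / d)) * p,
         c₁ / (1 + c₂ * (c₁ / d)) * p - c₁, 0) := by
      rw [hg]
      simp only [Prod.mk.injEq]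
      refine ⟨by ring, ?_, by simp⟩
      rw [mul_zero, add_zero]
      congr 1
      field_simp
    have hg1 : g (p, c₁ / d, 0) 1 =
        (a * (1 - p) - (q₁ + q₂ * (c₁ / d)) * p,
         c₁ / (1 + c₂ * (c₁ / d)) * p - c₁,
         c₁M / (1 + c₂M * (c₁ / d))) := by
      rw [hg]
      simp only [Prod.mk.injEq]
      refine ⟨by ring, ?_, by norm_num⟩
      rw [mul_zero, add_zero]
      congr 1
      field_simp
    have hfun1 : (fun y => g y 1) = (fun y : ℝ×ℝ×ℝ =>
        (a * (1 - y.1) - (q₁ + q₂ * y.2.1 + q₃ * y.2.2) * y.1,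
         c₁ / (1 + c₂ * y.2.1 + c₃ * y.2.2) * y.1 - d * y.2.1,
         c₁M / (1 + c₂M * y.2.1 + c₃M * y.2.2) * 1 - dM * y.2.2)) := funext fun y => hg y 1
    have hfun0 : (fun y => g y 0) = (fun y : ℝ×ℝ×ℝ =>
        (a * (1 - y.1) - (q₁ + q₂ * y.2.1 + q₃ * y.2.2) * y.1,
         c₁ / (1 + c₂ * y.2.1 + c₃ * y.2.2) * y.1 - d * y.2.1,
         c₁M / (1 + c₂M * y.2.1 + c₃M * y.2.2) * 0 - dM * y.2.2)) := funext fun y => hg y 0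
    have hbr : fderiv ℝ (fun y => g y 1) ((p, c₁/d, 0) : ℝ×ℝ×ℝ) (g (p, c₁/d, 0) 0)
          - fderiv ℝ (fun y => g y 0) ((p, c₁/d, 0) : ℝ×ℝ×ℝ) (g (p, c₁/d, 0) 1)
        = (q₃ * (c₁M / (1 + c₂M * (c₁ / d))) * p,
           c₁ * c₃ * (c₁M / (1 + c₂M * (c₁ / d))) * p / (1 + c₂ * (c₁ / d))^2,
           dM * (c₁M / (1 + c₂M * (c₁ / d)))
             - c₁M * c₂M * (c₁ / (1 + c₂ * (c₁ / d)) * p - c₁) / (1 + c₂M * (c₁ / d))^2) := by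
      rw [hfun1, hfun0,
        fderiv_g_aux a q₁ c₁ d c₁M dM q₂ q₃ c₂ c₃ c₂M c₃M 1 _ hEne hEMne _,
        fderiv_g_aux a q₁ c₁ d c₁M dM q₂ q₃ c₂ c₃ c₂M c₃M 0 _ hEne hEMne _,
        hg0, hg1]
      simp only [Prod.mk_sub_mk, Prod.mk.injEq, mul_zero, add_zero, zero_mul, mul_one, sub_zero]
      refine ⟨by ring, ?_, ?_⟩
      · field_simp
        ring
      · field_simp
        ring
    rw [hbr, hg0, hg1]
    apply aux_li
    · exact ne_of_gt hm
    · have heq : (a * (1 - p) - (q₁ + q₂ * (c₁ / d)) * p)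
            * (c₁ * c₃ * (c₁M / (1 + c₂M * (c₁ / d))) * p / (1 + c₂ * (c₁ / d))^2)
          - (c₁ / (1 + c₂ * (c₁ / d)) * p - c₁) * (q₃ * (c₁M / (1 + c₂M * (c₁ / d))) * p)
          = ((c₁M / (1 + c₂M * (c₁ / d))) * p) *
            ((a * (1 - p) - (q₁ + q₂ * (c₁ / d)) * p) * (c₁ * c₃) / (1 + c₂ * (c₁ / d))^2
              - (c₁ / (1 + c₂ * (c₁ / d)) * p - c₁) * q₃) := by
        field_simp
      rw [heq]
      exact mul_ne_zero (mul_ne_zero (ne_of_gt hm) (ne_of_gt hppos)) hkey
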